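/- Let v₁, v₂ ∈ ℤ² be linearly independent with det(v₁,v₂) > 0, and let u ∈ ℤ² be primitive with det(u,v₂) > 0 and det(u,v₁) ≠ 0. Let 𝔞 = ℝ₊v₁ + ℝ₊v₂ and 𝔞ᵢ = ℝ₊u + ℝ₊vᵢ. Then χ(𝔞) = χ(𝔞₂) + χ(𝔞₁) − χ(ℝ₊u) if u ∈ 𝔞, and χ(𝔞) = χ(𝔞₂) − χ(𝔞₁) + χ(ℝ₊v₁) if u ∉ 𝔞, as functions on ℝ². -/

import Mathlib

lemma mem_cone_iff (w₁ w₂ x : Fin 2 → ℝ) (h : 0 < w₁ 0 * w₂ 1 - w₁ 1 * w₂ 0) :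
    x ∈ {y : Fin 2 → ℝ | ∃ a b : ℝ, 0 ≤ a ∧ 0 ≤ b ∧ y = a • w₁ + b • w₂} ↔
    (0 ≤ w₁ 0 * x 1 - w₁ 1 * x 0 ∧ 0 ≤ x 0 * w₂ 1 - x 1 * w₂ 0) := by
  constructor
  · rintro ⟨a, b, ha, hb, rfl⟩
    simp only [Pi.add_apply, Pi.smul_apply, smul_eq_mul]
    constructor
    · nlinarith [mul_nonneg hb h.le]
    · nlinarith [mul_nonneg ha h.le]
  · rintro ⟨h1, h2⟩
    set D := w₁ 0 * w₂ 1 - w₁ 1 * w₂ 0 with hD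
    refine ⟨(x 0 * w₂ 1 - x 1 * w₂ 0) / D, (w₁ 0 * x 1 - w₁ 1 * x 0) / D,
      div_nonneg h2 h.le, div_nonneg h1 h.le, ?_⟩
    funext i
    fin_cases i <;>
    · simp only [Pi.add_apply, Pi.smul_apply, smul_eq_mul, Fin.zero_eta, Fin.mk_one]
      field_simp
      rw [hD]
      ring

lemma mem_cone_iff' (w₁ w₂ x : Fin 2 → ℝ) (h : 0 < w₁ 0 * w₂ 1 - w₁ 1 * w₂ 0) :
    x ∈ {y : Fin 2 → ℝ | ∃ a b : ℝ, 0 ≤ a ∧ 0 ≤ b ∧ y = a • w₂ + b • w₁} ↔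
    (0 ≤ w₁ 0 * x 1 - w₁ 1 * x 0 ∧ 0 ≤ x 0 * w₂ 1 - x 1 * w₂ 0) := by
  rw [← mem_cone_iff w₁ w₂ x h]
  constructor <;> rintro ⟨a, b, ha, hb, rfl⟩ <;> exact ⟨b, a, hb, ha, add_comm _ _⟩

lemma mem_ray_iff (v w x : Fin 2 → ℝ) (h : 0 < v 0 * w 1 - v 1 * w 0) :
    x ∈ {y : Fin 2 → ℝ | ∃ t : ℝ, 0 ≤ t ∧ y = t • w} ↔
    (w 0 * x 1 - w 1 * x 0 = 0 ∧ 0 ≤ v 0 * x 1 - v 1 * x 0) := by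
  constructor
  · rintro ⟨t, ht, rfl⟩
    simp only [Pi.smul_apply, smul_eq_mul]
    constructor
    · ring
    · nlinarith [mul_nonneg ht h.le]
  · rintro ⟨h1, h2⟩
    have hw : w 0 ≠ 0 ∨ w 1 ≠ 0 := by
      by_contra hc
      push_neg at hc
      rw [hc.1, hc.2] at h
      simp at h
    have : ∃ t : ℝ, x = t • w := by
      rcases hw with hw0 | hw1
      · refine ⟨x 0 / w 0, ?_⟩
        funext i
        fin_cases i <;> (simp only [Pi.smul_apply, smul_eq_mul, Fin.zero_eta, Fin.mk_one]; field_simp) <;> nlinarith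
      · refine ⟨x 1 / w 1, ?_⟩
        funext i
        fin_cases i <;> (simp only [Pi.smul_apply, smul_eq_mul, Fin.zero_eta, Fin.mk_one]; field_simp) <;> nlinarith
    obtain ⟨t, rfl⟩ := this
    refine ⟨t, ?_, rfl⟩
    simp only [Pi.smul_apply, smul_eq_mul] at h2
    nlinarith

lemma ind_and (P Q : Prop) [Decidable P] [Decidable Q] :
    (if P ∧ Q then (1:ℝ) else 0) = (if P then (1:ℝ) else 0) * (if Q then (1:ℝ) else 0) := by
  by_cases hP : P <;> by_cases hQ : Q <;> simp [hP, hQ]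

lemma key1 (d d₂ e a b c : ℝ) (hd : 0 < d) (hd₂ : 0 < d₂) (he : 0 < e)
    (hrel : d * c = d₂ * a - e * b) :
    (if 0 ≤ a ∧ 0 ≤ b then (1:ℝ) else 0) =
      (if 0 ≤ c ∧ 0 ≤ b then (1:ℝ) else 0) + (if 0 ≤ a ∧ 0 ≤ -c then (1:ℝ) else 0)
        - (if c = 0 ∧ 0 ≤ a then (1:ℝ) else 0) := by
  simp only [ind_and]
  rcases le_or_gt 0 a with ha | ha <;> rcases le_or_gt 0 b with hb | hb <;>
    rcases lt_trichotomy c 0 with hc | hc | hc <;>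
    split_ifs <;>
    first
      | (norm_num; done)
      | (exfalso; push_neg at *;
         first
           | linarith
           | nlinarith
           | exact absurd ‹c = 0› ‹c ≠ 0›)

lemma key2 (d d₂ e a b c : ℝ) (hd : 0 < d) (hd₂ : 0 < d₂) (he : 0 < e)
    (hrel : d₂ * a = d * c - e * b) :
    (if 0 ≤ a ∧ 0 ≤ b then (1:ℝ) else 0) =
      (if 0 ≤ c ∧ 0 ≤ b then (1:ℝ) else 0) - (if 0 ≤ c ∧ 0 ≤ -a then (1:ℝ) else 0)
        + (if a = 0 ∧ 0 ≤ c then (1:ℝ) else 0) := by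
  simp only [ind_and]
  rcases le_or_gt 0 c with hcc | hcc <;> rcases le_or_gt 0 b with hb | hb <;>
    rcases lt_trichotomy a 0 with ha | ha | ha <;>
    split_ifs <;>
    first
      | (norm_num; done)
      | (exfalso; push_neg at *;
         first
           | linarith
           | nlinarith
           | exact absurd ‹a = 0› ‹a ≠ 0›)

/-- Decomposition of the characteristic function of the cone `ℝ₊v₁ + ℝ₊v₂`
using the cones `ℝ₊u + ℝ₊vᵢ`. -/
theorem cone_indicator_decomposition (v₁ v₂ u : Fin 2 → ℤ)
    (hdet : 0 < v₁ 0 * v₂ 1 - v₁ 1 * v₂ 0)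
    (huprim : IsCoprime (u 0) (u 1))
    (hdet2 : 0 < u 0 * v₂ 1 - u 1 * v₂ 0)
    (hdet1 : u 0 * v₁ 1 - u 1 * v₁ 0 ≠ 0) :
    let v₁ℝ : Fin 2 → ℝ := fun i => (v₁ i : ℝ)
    let v₂ℝ : Fin 2 → ℝ := fun i => (v₂ i : ℝ)
    let uℝ : Fin 2 → ℝ := fun i => (u i : ℝ)
    let cone : (Fin 2 → ℝ) → (Fin 2 → ℝ) → Set (Fin 2 → ℝ) :=
      fun w₁ w₂ => {x | ∃ a b : ℝ, 0 ≤ a ∧ 0 ≤ b ∧ x = a • w₁ + b • w₂}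
    let ray : (Fin 2 → ℝ) → Set (Fin 2 → ℝ) := fun w => {x | ∃ a : ℝ, 0 ≤ a ∧ x = a • w}
    let χ : Set (Fin 2 → ℝ) → (Fin 2 → ℝ) → ℝ := fun S => Set.indicator S (fun _ => 1)
    (uℝ ∈ cone v₁ℝ v₂ℝ → ∀ x, χ (cone v₁ℝ v₂ℝ) x =
        χ (cone uℝ v₂ℝ) x + χ (cone uℝ v₁ℝ) x - χ (ray uℝ) x) ∧
    (uℝ ∉ cone v₁ℝ v₂ℝ → ∀ x, χ (cone v₁ℝ v₂ℝ) x =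
        χ (cone uℝ v₂ℝ) x - χ (cone uℝ v₁ℝ) x + χ (ray v₁ℝ) x) := by
  intro v₁ℝ v₂ℝ uℝ cone ray χ
  classical
  have hd : (0:ℝ) < v₁ℝ 0 * v₂ℝ 1 - v₁ℝ 1 * v₂ℝ 0 := by
    show (0:ℝ) < (v₁ 0 : ℝ) * (v₂ 1 : ℝ) - (v₁ 1 : ℝ) * (v₂ 0 : ℝ)
    exact_mod_cast hdet
  have hd₂ : (0:ℝ) < uℝ 0 * v₂ℝ 1 - uℝ 1 * v₂ℝ 0 := by
    show (0:ℝ) < (u 0 : ℝ) * (v₂ 1 : ℝ) - (u 1 : ℝ) * (v₂ 0 : ℝ)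
    exact_mod_cast hdet2
  have hd1 : uℝ 0 * v₁ℝ 1 - uℝ 1 * v₁ℝ 0 ≠ 0 := by
    show (u 0 : ℝ) * (v₁ 1 : ℝ) - (u 1 : ℝ) * (v₁ 0 : ℝ) ≠ 0
    exact_mod_cast hdet1
  constructor
  · -- case u ∈ cone
    intro hmem x
    obtain ⟨h1u, _⟩ := (mem_cone_iff v₁ℝ v₂ℝ uℝ hd).mp hmem
    have he' : (0:ℝ) < v₁ℝ 0 * uℝ 1 - v₁ℝ 1 * uℝ 0 := by
      rcases h1u.lt_or_eq with h | h
      · exact h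
      · exact absurd (by linarith) hd1
    have eA : χ (cone v₁ℝ v₂ℝ) x =
        if 0 ≤ v₁ℝ 0 * x 1 - v₁ℝ 1 * x 0 ∧ 0 ≤ x 0 * v₂ℝ 1 - x 1 * v₂ℝ 0 then (1:ℝ) else 0 := by
      show Set.indicator (cone v₁ℝ v₂ℝ) (fun _ => (1:ℝ)) x = _
      rw [Set.indicator_apply]
      exact if_congr (mem_cone_iff v₁ℝ v₂ℝ x hd) rfl rfl
    have eB : χ (cone uℝ v₂ℝ) x =
        if 0 ≤ uℝ 0 * x 1 - uℝ 1 * x 0 ∧ 0 ≤ x 0 * v₂ℝ 1 - x 1 * v₂ℝ 0 then (1:ℝ) else 0 := by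
      show Set.indicator (cone uℝ v₂ℝ) (fun _ => (1:ℝ)) x = _
      rw [Set.indicator_apply]
      exact if_congr (mem_cone_iff uℝ v₂ℝ x hd₂) rfl rfl
    have hCiff : x ∈ cone uℝ v₁ℝ ↔
        (0 ≤ v₁ℝ 0 * x 1 - v₁ℝ 1 * x 0 ∧ 0 ≤ -(uℝ 0 * x 1 - uℝ 1 * x 0)) := by
      constructor
      · intro h
        obtain ⟨p, q⟩ := (mem_cone_iff' v₁ℝ uℝ x he').mp h
        exact ⟨p, by linarith⟩
      · rintro ⟨p, q⟩
        exact (mem_cone_iff' v₁ℝ uℝ x he').mpr ⟨p, by linarith⟩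
    have eC : χ (cone uℝ v₁ℝ) x =
        if 0 ≤ v₁ℝ 0 * x 1 - v₁ℝ 1 * x 0 ∧ 0 ≤ -(uℝ 0 * x 1 - uℝ 1 * x 0) then (1:ℝ) else 0 := by
      show Set.indicator (cone uℝ v₁ℝ) (fun _ => (1:ℝ)) x = _
      rw [Set.indicator_apply]
      exact if_congr hCiff rfl rfl
    have eR : χ (ray uℝ) x =
        if uℝ 0 * x 1 - uℝ 1 * x 0 = 0 ∧ 0 ≤ v₁ℝ 0 * x 1 - v₁ℝ 1 * x 0 then (1:ℝ) else 0 := by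
      show Set.indicator (ray uℝ) (fun _ => (1:ℝ)) x = _
      rw [Set.indicator_apply]
      exact if_congr (mem_ray_iff v₁ℝ uℝ x he') rfl rfl
    rw [eA, eB, eC, eR]
    exact key1 (v₁ℝ 0 * v₂ℝ 1 - v₁ℝ 1 * v₂ℝ 0) (uℝ 0 * v₂ℝ 1 - uℝ 1 * v₂ℝ 0)
      (v₁ℝ 0 * uℝ 1 - v₁ℝ 1 * uℝ 0)
      (v₁ℝ 0 * x 1 - v₁ℝ 1 * x 0) (x 0 * v₂ℝ 1 - x 1 * v₂ℝ 0) (uℝ 0 * x 1 - uℝ 1 * x 0)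
      hd hd₂ he' (by ring)
  · -- case u ∉ cone
    intro hmem x
    have he : (0:ℝ) < uℝ 0 * v₁ℝ 1 - uℝ 1 * v₁ℝ 0 := by
      rcases hd1.lt_or_gt with h | h
      · exfalso
        exact hmem ((mem_cone_iff v₁ℝ v₂ℝ uℝ hd).mpr ⟨by linarith, hd₂.le⟩)
      · exact h
    have eA : χ (cone v₁ℝ v₂ℝ) x =
        if 0 ≤ v₁ℝ 0 * x 1 - v₁ℝ 1 * x 0 ∧ 0 ≤ x 0 * v₂ℝ 1 - x 1 * v₂ℝ 0 then (1:ℝ) else 0 := by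
      show Set.indicator (cone v₁ℝ v₂ℝ) (fun _ => (1:ℝ)) x = _
      rw [Set.indicator_apply]
      exact if_congr (mem_cone_iff v₁ℝ v₂ℝ x hd) rfl rfl
    have eB : χ (cone uℝ v₂ℝ) x =
        if 0 ≤ uℝ 0 * x 1 - uℝ 1 * x 0 ∧ 0 ≤ x 0 * v₂ℝ 1 - x 1 * v₂ℝ 0 then (1:ℝ) else 0 := by
      show Set.indicator (cone uℝ v₂ℝ) (fun _ => (1:ℝ)) x = _
      rw [Set.indicator_apply]
      exact if_congr (mem_cone_iff uℝ v₂ℝ x hd₂) rfl rfl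
    have hCiff : x ∈ cone uℝ v₁ℝ ↔
        (0 ≤ uℝ 0 * x 1 - uℝ 1 * x 0 ∧ 0 ≤ -(v₁ℝ 0 * x 1 - v₁ℝ 1 * x 0)) := by
      constructor
      · intro h
        obtain ⟨p, q⟩ := (mem_cone_iff uℝ v₁ℝ x he).mp h
        exact ⟨p, by linarith⟩
      · rintro ⟨p, q⟩
        exact (mem_cone_iff uℝ v₁ℝ x he).mpr ⟨p, by linarith⟩
    have eC : χ (cone uℝ v₁ℝ) x =
        if 0 ≤ uℝ 0 * x 1 - uℝ 1 * x 0 ∧ 0 ≤ -(v₁ℝ 0 * x 1 - v₁ℝ 1 * x 0) then (1:ℝ) else 0 := by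
      show Set.indicator (cone uℝ v₁ℝ) (fun _ => (1:ℝ)) x = _
      rw [Set.indicator_apply]
      exact if_congr hCiff rfl rfl
    have eR : χ (ray v₁ℝ) x =
        if v₁ℝ 0 * x 1 - v₁ℝ 1 * x 0 = 0 ∧ 0 ≤ uℝ 0 * x 1 - uℝ 1 * x 0 then (1:ℝ) else 0 := by
      show Set.indicator (ray v₁ℝ) (fun _ => (1:ℝ)) x = _
      rw [Set.indicator_apply]
      exact if_congr (mem_ray_iff uℝ v₁ℝ x he) rfl rfl
    rw [eA, eB, eC, eR]
    exact key2 (v₁ℝ 0 * v₂ℝ 1 - v₁ℝ 1 * v₂ℝ 0) (uℝ 0 * v₂ℝ 1 - uℝ 1 * v₂ℝ 0)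
      (uℝ 0 * v₁ℝ 1 - uℝ 1 * v₁ℝ 0)
      (v₁ℝ 0 * x 1 - v₁ℝ 1 * x 0) (x 0 * v₂ℝ 1 - x 1 * v₂ℝ 0) (uℝ 0 * x 1 - uℝ 1 * x 0)
      hd hd₂ he (by ring)
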